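/- Let K⁺ be the maximal totally real subfield of ℚ₂ and O its ring of integers. Then every sum of seven squares in O is a sum of at most six squares in O; consequently 4 ≤ P(O) ≤ 6. -/

import Mathlib

open Polynomial

/-- An element of a ℚ-algebra is totally real if it is algebraic over ℚ and all
complex roots of its minimal polynomial are real. -/
def TotallyReal {A : Type*} [Field A] [Algebra ℚ A] (x : A) : Prop :=
  IsAlgebraic ℚ x ∧ ∀ z : ℂ, Polynomial.aeval z (minpoly ℚ x) = 0 → z.im = 0

/-- `x` is a sum of `n` squares of elements of the subset `S`. -/
def IsSumOfSquaresIn {R : Type*} [CommRing R] (S : Set R) (n : ℕ) (x : R) : Prop :=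
  ∃ f : Fin n → R, (∀ i, f i ∈ S) ∧ x = ∑ i, (f i) ^ 2

/-- The Pythagoras number of the set `S`: the least `n` with Σⁿ S² = Σⁿ⁺¹ S². -/
noncomputable def pythagorasNumberOf {R : Type*} [CommRing R] (S : Set R) : ℕ∞ :=
  sInf ((fun n : ℕ => (n : ℕ∞)) ''
    {n | ∀ x, IsSumOfSquaresIn S n x ↔ IsSumOfSquaresIn S (n + 1) x})

namespace TRQp2Aux

-- roots of minpoly of sum of squares of totally real elements are nonneg reals
lemma roots_nonneg_real {ι : Type} (T : Finset ι) (a : ι → ℚ_[2])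
    (ha : ∀ i ∈ T, TotallyReal (a i)) (hint : ∀ i ∈ T, IsIntegral ℚ (a i))
    (ρ : ℂ) (hρ : aeval ρ (minpoly ℚ (∑ i ∈ T, (a i)^2)) = 0) :
    ρ.im = 0 ∧ 0 ≤ ρ.re := by
  classical
  set t := ∑ i ∈ T, (a i)^2 with ht
  set Sset : Set ℚ_[2] := (↑(T.image a) : Set ℚ_[2]) with hS
  have hK : ∀ s ∈ Sset, IsIntegral ℚ s ∧ ((minpoly ℚ s).map (algebraMap ℚ ℂ)).Splits := by
    intro s hs
    simp only [hS, Finset.coe_image, Set.mem_image, Finset.mem_coe] at hs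
    obtain ⟨i, hi, rfl⟩ := hs
    exact ⟨hint i hi, IsAlgClosed.splits _⟩
  have hx : t ∈ IntermediateField.adjoin ℚ Sset := by
    rw [ht]
    refine Subalgebra.sum_mem _ fun i hi => ?_
    refine pow_mem ?_ 2
    exact IntermediateField.subset_adjoin ℚ Sset (by
      simp [hS, Finset.coe_image]; exact ⟨i, hi, rfl⟩)
  obtain ⟨φ, hφ⟩ := IntermediateField.exists_algHom_adjoin_of_splits_of_aeval hK hx hρ
  -- express ⟨t, hx⟩ as sum of squares in the adjoin
  have hmem : ∀ i ∈ T, a i ∈ IntermediateField.adjoin ℚ Sset := fun i hi =>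
    IntermediateField.subset_adjoin ℚ Sset (by simp [hS, Finset.coe_image]; exact ⟨i, hi, rfl⟩)
  have hsum : (⟨t, hx⟩ : IntermediateField.adjoin ℚ Sset) =
      ∑ i ∈ T.attach, (⟨a i.1, hmem i.1 i.2⟩ : IntermediateField.adjoin ℚ Sset)^2 := by
    apply Subtype.ext
    push_cast
    rw [ht, ← Finset.sum_attach T (fun i => (a i)^2)]
  have hρ2 : ρ = ∑ i ∈ T.attach, (φ ⟨a i.1, hmem i.1 i.2⟩)^2 := by
    rw [← hφ, hsum, map_sum]
    exact Finset.sum_congr rfl fun i _ => map_pow φ ⟨a i.1, hmem i.1 i.2⟩ 2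
  -- each φ value is real
  have hreal : ∀ i : T, (φ ⟨a i.1, hmem i.1 i.2⟩).im = 0 := by
    intro i
    have hmp : minpoly ℚ ((⟨a i.1, hmem i.1 i.2⟩ : IntermediateField.adjoin ℚ Sset)) = minpoly ℚ (a i.1) := by
      have := minpoly.algHom_eq (IntermediateField.adjoin ℚ Sset).val Subtype.val_injective
        (⟨a i.1, hmem i.1 i.2⟩ : IntermediateField.adjoin ℚ Sset)
      exact IntermediateField.minpoly_eq _
    refine (ha i.1 i.2).2 _ ?_
    rw [Polynomial.aeval_algHom_apply, ← hmp, minpoly.aeval, map_zero]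
  -- conclude
  have : ρ = ((∑ i ∈ T.attach, ((φ ⟨a i.1, hmem i.1 i.2⟩).re)^2 : ℝ) : ℂ) := by
    rw [hρ2]
    push_cast
    refine Finset.sum_congr rfl fun i _ => ?_
    congr 1
    exact (Complex.ext (by simp) (by simp [hreal i])).symm
  rw [this]
  exact ⟨Complex.ofReal_im _, by
    simp only [Complex.ofReal_re]
    exact Finset.sum_nonneg fun i _ => sq_nonneg _⟩

lemma star {ι : Type} (T : Finset ι) (a : ι → ℚ_[2])
    (ha : ∀ i ∈ T, TotallyReal (a i) ∧ IsIntegral ℤ (a i))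
    (r : ℚ_[2]) (hr : r^2 = ∑ i ∈ T, (a i)^2) :
    TotallyReal r ∧ IsIntegral ℤ r := by
  have htint : IsIntegral ℤ (∑ i ∈ T, (a i)^2) :=
    IsIntegral.sum _ (fun i hi => ((ha i hi).2).pow 2)
  have hrint : IsIntegral ℤ r := by
    refine IsIntegral.of_pow (n := 2) (by norm_num) ?_
    rw [hr]; exact htint
  refine ⟨⟨?_, ?_⟩, hrint⟩
  · exact (hrint.tower_top (A := ℚ)).isAlgebraic
  · intro z hz
    set t := ∑ i ∈ T, (a i)^2 with ht
    have hdvd : minpoly ℚ r ∣ (minpoly ℚ t).comp (X^2) := by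
      apply minpoly.dvd
      rw [Polynomial.aeval_comp]
      simp only [map_pow, Polynomial.aeval_X]
      rw [hr, minpoly.aeval]
    have hz2 : aeval (z^2) (minpoly ℚ t) = 0 := by
      obtain ⟨q, hq⟩ := hdvd
      have : aeval z ((minpoly ℚ t).comp (X^2)) = 0 := by
        rw [hq, map_mul, hz, zero_mul]
      rwa [Polynomial.aeval_comp, map_pow, Polynomial.aeval_X] at this
    have hroots := roots_nonneg_real T a (fun i hi => (ha i hi).1)
      (fun i hi => ((ha i hi).2.tower_top (A := ℚ))) (z^2) hz2
    obtain ⟨him, hre⟩ := hroots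
    have h1 : (z^2).im = 2 * z.re * z.im := by
      rw [sq, Complex.mul_im]; ring
    have h2 : (z^2).re = z.re^2 - z.im^2 := by
      rw [sq, Complex.mul_re]; ring
    rw [h1] at him
    rw [h2] at hre
    rcases mul_eq_zero.mp him with h | h
    · rcases mul_eq_zero.mp h with h' | h'
      · norm_num at h'
      · nlinarith [sq_nonneg z.im]
    · exact h

lemma two_cast : ((2:ℕ):ℤ_[2]) = 2 := by norm_num

lemma ker_pow (n : ℕ) (x : ℤ_[2]) (h : PadicInt.toZModPow n x = 0) :
    ∃ c : ℤ_[2], x = 2^n * c := by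
  have : x ∈ RingHom.ker (PadicInt.toZModPow n : ℤ_[2] →+* ZMod (2^n)) := h
  rw [PadicInt.ker_toZModPow, Ideal.mem_span_singleton] at this
  obtain ⟨c, hc⟩ := this
  exact ⟨c, by rw [hc, two_cast]⟩

lemma chi_two_pow (n m : ℕ) (h : 0 < n) (hle : n ≤ m) :
    PadicInt.toZModPow n ((2:ℤ_[2])^m) = 0 := by
  have h2 : PadicInt.toZModPow n (2:ℤ_[2]) = 2 := by
    rw [← two_cast, map_natCast]; norm_num
  rw [map_pow, h2]
  have : ((2:ZMod (2^n)))^n = 0 := by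
    have : ((2:ℕ):ZMod (2^n))^n = 0 := by
      rw [← Nat.cast_pow, ZMod.natCast_self]
    simpa using this
  calc (2:ZMod (2^n))^m = (2:ZMod (2^n))^n * 2^(m-n) := by rw [← pow_add]; congr 1; omega
    _ = 0 := by rw [this, zero_mul]
lemma hensel_sqrt (w : ℤ_[2]) (hw : PadicInt.toZModPow 3 w = 1) : ∃ r : ℤ_[2], r^2 = w := by
  have hker : (1 - w) ∈ RingHom.ker (PadicInt.toZModPow 3 : ℤ_[2] →+* ZMod (2^3)) := by
    rw [RingHom.mem_ker, map_sub, map_one, hw, sub_self]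
  rw [PadicInt.ker_toZModPow, Ideal.mem_span_singleton] at hker
  obtain ⟨c, hc0⟩ := hker
  have hc : 1 - w = (2:ℤ_[2])^3 * c := by exact_mod_cast hc0
  have hn2 : ‖(2 : ℤ_[2])‖ = 2⁻¹ := by
    have := PadicInt.norm_p (p := 2); simpa using this
  have hF : ‖((X^2 - C w : Polynomial ℤ_[2]).eval 1)‖ < ‖((X^2 - C w : Polynomial ℤ_[2]).derivative.eval 1)‖^2 := by
    have h1 : (X^2 - C w : Polynomial ℤ_[2]).eval 1 = 1 - w := by simp
    have h2 : (X^2 - C w : Polynomial ℤ_[2]).derivative.eval 1 = 2 := by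
      simp [derivative_sub, derivative_pow]
    rw [h1, h2, hc]
    have hb : ‖(2:ℤ_[2])^3 * c‖ ≤ (2⁻¹)^3 := by
      rw [norm_mul, norm_pow, hn2]
      calc (2⁻¹:ℝ)^3 * ‖c‖ ≤ (2⁻¹)^3 * 1 :=
            mul_le_mul_of_nonneg_left c.norm_le_one (by positivity)
        _ = (2⁻¹)^3 := by ring
    calc ‖(2:ℤ_[2])^3 * c‖ ≤ (2⁻¹)^3 := hb
      _ < (2⁻¹)^2 := by norm_num
      _ = ‖(2:ℤ_[2])‖^2 := by rw [hn2]
  obtain ⟨z, hz, -⟩ := hensels_lemma hF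
  refine ⟨z, ?_⟩
  have h0 : z^2 - w = 0 := by simpa using hz
  exact sub_eq_zero.mp h0

lemma sqrt_cases (t : ℤ_[2])
    (h : PadicInt.toZModPow 3 t = 1 ∨ PadicInt.toZModPow 5 t = 4 ∨ PadicInt.toZModPow 7 t = 16) :
    ∃ r : ℤ_[2], t = r^2 := by
  rcases h with h | h | h
  · obtain ⟨r, hr⟩ := hensel_sqrt t h
    exact ⟨r, hr.symm⟩
  · have h4 : PadicInt.toZModPow 5 (t - 4) = 0 := by
      rw [map_sub, h, show (PadicInt.toZModPow 5 (4:ℤ_[2])) = 4 from map_ofNat _ 4, sub_self]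
    obtain ⟨c, hc⟩ := ker_pow 5 _ h4
    have ht : t = 4 * (1 + 2^3 * c) := by linear_combination hc
    have hw : PadicInt.toZModPow 3 (1 + 2^3 * c) = 1 := by
      rw [map_add, map_one, map_mul, chi_two_pow 3 3 (by norm_num) le_rfl, zero_mul, add_zero]
    obtain ⟨r, hr⟩ := hensel_sqrt _ hw
    exact ⟨2 * r, by rw [ht, ← hr]; ring⟩
  · have h4 : PadicInt.toZModPow 7 (t - 16) = 0 := by
      rw [map_sub, h, show (PadicInt.toZModPow 7 (16:ℤ_[2])) = 16 from map_ofNat _ 16, sub_self]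
    obtain ⟨c, hc⟩ := ker_pow 7 _ h4
    have ht : t = 16 * (1 + 2^3 * c) := by linear_combination hc
    have hw : PadicInt.toZModPow 3 (1 + 2^3 * c) = 1 := by
      rw [map_add, map_one, map_mul, chi_two_pow 3 3 (by norm_num) le_rfl, zero_mul, add_zero]
    obtain ⟨r, hr⟩ := hensel_sqrt _ hw
    exact ⟨4 * r, by rw [ht, ← hr]; ring⟩
lemma egz4 (f : Fin 7 → ZMod 4) :
    ∃ T : Finset (Fin 7), T.card = 4 ∧ ∑ i ∈ T, f i = 0 := by
  classical
  set π : ZMod 4 →+* ZMod 2 := ZMod.castHom (show (2:ℕ) ∣ 4 by norm_num) (ZMod 2) with hπ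
  have pair : ∀ s : Finset (Fin 7), 3 ≤ s.card →
      ∃ i ∈ s, ∃ j ∈ s, i ≠ j ∧ π (f i) = π (f j) := by
    intro s hs
    have hc : (Finset.univ : Finset (ZMod 2)).card < s.card := by
      simpa using lt_of_lt_of_le (by norm_num) hs
    obtain ⟨i, hi, j, hj, hij, hfe⟩ :=
      Finset.exists_ne_map_eq_of_card_lt_of_maps_to hc
        (fun x _ => Finset.mem_univ (π (f x)))
    exact ⟨i, hi, j, hj, hij, hfe⟩
  obtain ⟨i₁, hi₁, j₁, hj₁, hne₁, he₁⟩ := pair Finset.univ (by simp)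
  set s₂ : Finset (Fin 7) := Finset.univ \ {i₁, j₁} with hs₂
  have hcard₂ : s₂.card = 5 := by
    rw [hs₂, Finset.card_sdiff_of_subset (by simp)]
    simp [Finset.card_insert_of_notMem, hne₁]
  obtain ⟨i₂, hi₂, j₂, hj₂, hne₂, he₂⟩ := pair s₂ (by omega)
  set s₃ : Finset (Fin 7) := s₂ \ {i₂, j₂} with hs₃
  have hcard₃ : s₃.card = 3 := by
    rw [hs₃, Finset.card_sdiff_of_subset ?_]
    · rw [hcard₂]; simp [Finset.card_insert_of_notMem, hne₂]
    · intro x hx; simp only [Finset.mem_insert, Finset.mem_singleton] at hx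
      rcases hx with rfl | rfl <;> assumption
  obtain ⟨i₃, hi₃, j₃, hj₃, hne₃, he₃⟩ := pair s₃ (by omega)
  -- sums
  have hu : ∀ x y : ZMod 4, π x = π y → (x + y = 0 ∨ x + y = 2) := by decide
  have key : ∀ u v : ZMod 4, (u = 0 ∨ u = 2) → (v = 0 ∨ v = 2) → u = v → u + v = 0 := by decide
  -- distinctness bookkeeping
  have h2ne1 : i₂ ≠ i₁ ∧ i₂ ≠ j₁ ∧ j₂ ≠ i₁ ∧ j₂ ≠ j₁ := by
    rw [hs₂] at hi₂ hj₂
    simp only [Finset.mem_sdiff, Finset.mem_insert, Finset.mem_singleton] at hi₂ hj₂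
    tauto
  have h3ne : i₃ ≠ i₁ ∧ i₃ ≠ j₁ ∧ i₃ ≠ i₂ ∧ i₃ ≠ j₂ ∧ j₃ ≠ i₁ ∧ j₃ ≠ j₁ ∧ j₃ ≠ i₂ ∧ j₃ ≠ j₂ := by
    rw [hs₃, hs₂] at hi₃ hj₃
    simp only [Finset.mem_sdiff, Finset.mem_insert, Finset.mem_singleton] at hi₃ hj₃
    tauto
  have mkT : ∀ (a b c d : Fin 7), a ≠ b → a ≠ c → a ≠ d → b ≠ c → b ≠ d → c ≠ d →
      f a + f b + (f c + f d) = 0 →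
      ∃ T : Finset (Fin 7), T.card = 4 ∧ ∑ i ∈ T, f i = 0 := by
    intro a b c d hab hac had hbc hbd hcd hsum
    refine ⟨{a, b, c, d}, ?_, ?_⟩
    · rw [Finset.card_insert_of_notMem (by simp [hab, hac, had]),
        Finset.card_insert_of_notMem (by simp [hbc, hbd]),
        Finset.card_insert_of_notMem (by simp [hcd]), Finset.card_singleton]
    · rw [Finset.sum_insert (by simp [hab, hac, had]),
        Finset.sum_insert (by simp [hbc, hbd]),
        Finset.sum_insert (by simp [hcd]), Finset.sum_singleton]
      rw [← add_assoc] at hsum ⊢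
      linear_combination hsum
  have hu₁ := hu _ _ he₁
  have hu₂ := hu _ _ he₂
  have hu₃ := hu _ _ he₃
  have tri : ∀ u v w : ZMod 4, (u = 0 ∨ u = 2) → (v = 0 ∨ v = 2) → (w = 0 ∨ w = 2) →
      (u + v = 0 ∨ u + w = 0 ∨ v + w = 0) := by decide
  rcases tri _ _ _ hu₁ hu₂ hu₃ with h | h | h
  · exact mkT i₁ j₁ i₂ j₂ hne₁ h2ne1.1.symm h2ne1.2.2.1.symm h2ne1.2.1.symm h2ne1.2.2.2.symm hne₂ h
  · exact mkT i₁ j₁ i₃ j₃ hne₁ h3ne.1.symm h3ne.2.2.2.2.1.symm h3ne.2.1.symm h3ne.2.2.2.2.2.1.symm hne₃ h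
  · exact mkT i₂ j₂ i₃ j₃ hne₂ h3ne.2.2.1.symm h3ne.2.2.2.2.2.2.1.symm h3ne.2.2.2.1.symm
      h3ne.2.2.2.2.2.2.2.symm hne₃ h

section KeyStep
variable (b : Fin 7 → ℤ_[2])

private noncomputable def gg : Fin 7 → ZMod (2^3) := fun i => PadicInt.toZModPow 3 (b i)
private noncomputable def GG : Fin 7 → ZMod (2^5) := fun i => PadicInt.toZModPow 5 (b i)

lemma gg_cast (i : Fin 7) :
    ZMod.castHom (pow_dvd_pow 2 (show 3 ≤ 5 by norm_num)) (ZMod (2^3)) (GG b i) = gg b i :=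
  RingHom.congr_fun (PadicInt.zmod_cast_comp_toZModPow 3 5 (by norm_num)) (b i)

lemma key_step (hnr : ∃ i, ¬(gg b i = 4 ∨ gg b i = 0)) :
    ∃ T : Finset (Fin 7), 2 ≤ T.card ∧ ∃ r : ℤ_[2], ∑ i ∈ T, (b i)^2 = r^2 := by
  classical
  set g := gg b with hgdef
  set G := GG b with hGdef
  have hcast : ∀ i, ZMod.castHom (pow_dvd_pow 2 (show 3 ≤ 5 by norm_num)) (ZMod (2^3)) (G i) = g i :=
    gg_cast b
  have hg2 : ∀ i, PadicInt.toZModPow 3 ((b i)^2) = (g i)^2 := fun i => by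
    rw [map_pow]; rfl
  have hG2 : ∀ i, PadicInt.toZModPow 5 ((b i)^2) = (G i)^2 := fun i => by
    rw [map_pow]; rfl
  set C0 : Finset (Fin 7) := Finset.univ.filter (fun i => ¬(g i = 2 ∨ g i = 6) ∧ g i ≠ 4 ∧ g i ≠ 0) with hC0def
  set C1 : Finset (Fin 7) := Finset.univ.filter (fun i => g i = 2 ∨ g i = 6) with hC1def
  set C2 : Finset (Fin 7) := Finset.univ.filter (fun i => g i = 4) with hC2def
  set C3 : Finset (Fin 7) := Finset.univ.filter (fun i => g i = 0) with hC3def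
  have sq0 : ∀ i ∈ C0, (g i)^2 = 1 := by
    intro i hi
    rw [hC0def, Finset.mem_filter] at hi
    revert hi
    have : ∀ u : ZMod (2^3), ¬(u = 2 ∨ u = 6) → u ≠ 4 → u ≠ 0 → u^2 = 1 := by decide
    exact fun h => this (g i) h.2.1 h.2.2.1 h.2.2.2
  have sq1 : ∀ i ∈ C1, (g i)^2 = 4 := by
    intro i hi
    rw [hC1def, Finset.mem_filter] at hi
    have : ∀ u : ZMod (2^3), (u = 2 ∨ u = 6) → u^2 = 4 := by decide
    exact this (g i) hi.2
  have sq1' : ∀ i ∈ C1, (G i)^2 = 4 := by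
    intro i hi
    rw [hC1def, Finset.mem_filter] at hi
    rw [← hcast i] at hi
    have : ∀ v : ZMod (2^5),
        (ZMod.castHom (pow_dvd_pow 2 (show 3 ≤ 5 by norm_num)) (ZMod (2^3)) v = 2 ∨
         ZMod.castHom (pow_dvd_pow 2 (show 3 ≤ 5 by norm_num)) (ZMod (2^3)) v = 6) → v^2 = 4 := by
      decide
    exact this (G i) hi.2
  have sq2' : ∀ i ∈ C2, (G i)^2 = 16 := by
    intro i hi
    rw [hC2def, Finset.mem_filter] at hi
    rw [← hcast i] at hi
    have : ∀ v : ZMod (2^5),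
        ZMod.castHom (pow_dvd_pow 2 (show 3 ≤ 5 by norm_num)) (ZMod (2^3)) v = 4 → v^2 = 16 := by
      decide
    exact this (G i) hi.2
  have sq3' : ∀ i ∈ C3, (G i)^2 = 0 := by
    intro i hi
    rw [hC3def, Finset.mem_filter] at hi
    rw [← hcast i] at hi
    have : ∀ v : ZMod (2^5),
        ZMod.castHom (pow_dvd_pow 2 (show 3 ≤ 5 by norm_num)) (ZMod (2^3)) v = 0 → v^2 = 0 := by
      decide
    exact this (G i) hi.2
  have sq23 : ∀ i, i ∈ C2 ∨ i ∈ C3 → (g i)^2 = 0 := by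
    intro i hi
    have : g i = 4 ∨ g i = 0 := by
      rcases hi with hi | hi
      · rw [hC2def, Finset.mem_filter] at hi; exact Or.inl hi.2
      · rw [hC3def, Finset.mem_filter] at hi; exact Or.inr hi.2
    have hval : ∀ u : ZMod (2^3), (u = 4 ∨ u = 0) → u^2 = 0 := by decide
    exact hval _ this

  -- distinctness helpers
  have hne01 : ∀ {i j}, i ∈ C0 → j ∈ C1 → i ≠ j := by
    intro i j hi hj h; subst h
    rw [hC0def, Finset.mem_filter] at hi; rw [hC1def, Finset.mem_filter] at hj
    exact hi.2.1 hj.2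
  have hne02 : ∀ {i j}, i ∈ C0 → j ∈ C2 → i ≠ j := by
    intro i j hi hj h; subst h
    rw [hC0def, Finset.mem_filter] at hi; rw [hC2def, Finset.mem_filter] at hj
    exact hi.2.2.1 hj.2
  have hne03 : ∀ {i j}, i ∈ C0 → j ∈ C3 → i ≠ j := by
    intro i j hi hj h; subst h
    rw [hC0def, Finset.mem_filter] at hi; rw [hC3def, Finset.mem_filter] at hj
    exact hi.2.2.2 hj.2
  have hval12 : ∀ u : ZMod (2^3), (u = 2 ∨ u = 6) → u ≠ 4 := by decide
  have hval13 : ∀ u : ZMod (2^3), (u = 2 ∨ u = 6) → u ≠ 0 := by decide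
  have hne12 : ∀ {i j}, i ∈ C1 → j ∈ C2 → i ≠ j := by
    intro i j hi hj h; subst h
    rw [hC1def, Finset.mem_filter] at hi; rw [hC2def, Finset.mem_filter] at hj
    exact hval12 _ hi.2 hj.2
  have hne13 : ∀ {i j}, i ∈ C1 → j ∈ C3 → i ≠ j := by
    intro i j hi hj h; subst h
    rw [hC1def, Finset.mem_filter] at hi; rw [hC3def, Finset.mem_filter] at hj
    exact hval13 _ hi.2 hj.2
  by_cases h0 : C0.Nonempty
  · obtain ⟨a0, ha0⟩ := h0
    by_cases h23 : (C2 ∪ C3).Nonempty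
    · -- case 1 : odd + (v≥2)
      obtain ⟨e, he⟩ := h23
      have he' := Finset.mem_union.mp he
      have hne : a0 ≠ e := by
        rcases he' with h | h
        · exact hne02 ha0 h
        · exact hne03 ha0 h
      refine ⟨{a0, e}, by rw [Finset.card_pair hne], ?_⟩
      apply sqrt_cases; left
      rw [map_sum, Finset.sum_pair hne, hg2, hg2, sq0 a0 ha0, sq23 e he']
      decide
    · -- C2 ∪ C3 = ∅
      have hC2 : C2 = ∅ := by
        rw [Finset.not_nonempty_iff_eq_empty, Finset.union_eq_empty] at h23; exact h23.1
      have hC3 : C3 = ∅ := by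
        rw [Finset.not_nonempty_iff_eq_empty, Finset.union_eq_empty] at h23; exact h23.2
      by_cases h1c : 2 ≤ C1.card
      · -- case 2 : odd + two (v=1)
        obtain ⟨e1, he1, e2, he2, hee⟩ := Finset.one_lt_card.mp (by omega : 1 < C1.card)
        have h01 : a0 ≠ e1 := hne01 ha0 he1
        have h02 : a0 ≠ e2 := hne01 ha0 he2
        refine ⟨{a0, e1, e2}, ?_, ?_⟩
        · rw [Finset.card_insert_of_notMem (by simp [h01, h02]), Finset.card_pair hee]; omega
        · apply sqrt_cases; left
          rw [map_sum, Finset.sum_insert (by simp [h01, h02]), Finset.sum_pair hee,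
            hg2, hg2, hg2, sq0 a0 ha0, sq1 e1 he1, sq1 e2 he2]
          decide
      · -- C1.card ≤ 1
        have hmemC0 : ∀ i, i ∈ C0 ↔ i ∉ C1 := by
          intro i
          constructor
          · intro hi hj
            rw [hC0def, Finset.mem_filter] at hi; rw [hC1def, Finset.mem_filter] at hj
            exact hi.2.1 hj.2
          · intro hj
            rw [hC1def, Finset.mem_filter] at hj
            rw [hC0def, Finset.mem_filter]
            refine ⟨Finset.mem_univ i, fun h => hj ⟨Finset.mem_univ i, h⟩, ?_, ?_⟩
            · intro h4
              have : i ∈ C2 := by rw [hC2def, Finset.mem_filter]; exact ⟨Finset.mem_univ i, h4⟩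
              rw [hC2] at this; exact absurd this (Finset.notMem_empty i)
            · intro h4
              have : i ∈ C3 := by rw [hC3def, Finset.mem_filter]; exact ⟨Finset.mem_univ i, h4⟩
              rw [hC3] at this; exact absurd this (Finset.notMem_empty i)
        have hC0compl : C0 = C1ᶜ := Finset.ext fun i => by
          rw [Finset.mem_compl]; exact hmemC0 i
        have hcard0 : C0.card = 7 - C1.card := by
          rw [hC0compl, Finset.card_compl]; rfl
        by_cases hc1 : C1.card = 1
        · -- case 3 : five odds + one (v=1)
          obtain ⟨e, he⟩ := Finset.card_eq_one.mp hc1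
          have heC1 : e ∈ C1 := by rw [he]; exact Finset.mem_singleton_self e
          set s : Finset (Fin 7) := C0.erase a0 with hsdef
          have hscard : s.card = 5 := by
            rw [hsdef, Finset.card_erase_of_mem ha0, hcard0, hc1]
          have hsub : s ⊆ C0 := Finset.erase_subset _ _
          have hes : e ∉ s := fun h => (hne01 (hsub h) heC1) rfl
          refine ⟨insert e s, ?_, ?_⟩
          · rw [Finset.card_insert_of_notMem hes, hscard]; omega
          · apply sqrt_cases; left
            rw [map_sum, Finset.sum_insert hes, hg2, sq1 e heC1]
            have : ∑ i ∈ s, PadicInt.toZModPow 3 ((b i)^2) = ∑ i ∈ s, 1 := by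
              refine Finset.sum_congr rfl fun i hi => ?_
              rw [hg2, sq0 i (hsub hi)]
            rw [this, Finset.sum_const, hscard]
            decide
        · -- C1 = ∅, C0 = univ : EGZ case with odd elements
          have hc1' : C1.card = 0 := by omega
          have hC0univ : C0 = Finset.univ := by
            rw [hC0compl, Finset.card_eq_zero.mp hc1']; simp
          have hodd : ∀ i, (g i)^2 = 1 := fun i =>
            sq0 i (by rw [hC0univ]; exact Finset.mem_univ i)
          have hker : ∀ i, ∃ c, (b i)^2 = 1 + 2^3 * c := by
            intro i
            have : PadicInt.toZModPow 3 ((b i)^2 - 1) = 0 := by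
              rw [map_sub, hg2, hodd i, map_one, sub_self]
            obtain ⟨c, hc⟩ := ker_pow 3 _ this
            exact ⟨c, by linear_combination hc⟩
          choose c hc using hker
          obtain ⟨T, hT4, hTsum⟩ := egz4 (fun i => PadicInt.toZModPow 2 (c i))
          have hker2 : PadicInt.toZModPow 2 (∑ i ∈ T, c i) = 0 := by
            rw [map_sum]; exact hTsum
          obtain ⟨d, hd⟩ := ker_pow 2 _ hker2
          refine ⟨T, by omega, ?_⟩
          apply sqrt_cases; right; left
          have hsum : ∑ i ∈ T, (b i)^2 = 4 + 2^5 * d := by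
            calc ∑ i ∈ T, (b i)^2 = ∑ i ∈ T, (1 + 2^3 * c i) :=
                  Finset.sum_congr rfl (fun i _ => hc i)
              _ = T.card • (1:ℤ_[2]) + 2^3 * ∑ i ∈ T, c i := by
                  rw [Finset.sum_add_distrib, Finset.sum_const, Finset.mul_sum]
              _ = 4 + 2^5 * d := by rw [hT4, hd]; push_cast; ring
          rw [hsum, map_add, map_mul, chi_two_pow 5 5 (by norm_num) le_rfl, zero_mul, add_zero,
            map_ofNat]
  · -- C0 = ∅
    have hC0e : C0 = ∅ := Finset.not_nonempty_iff_eq_empty.mp h0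
    by_cases h1 : C1.Nonempty
    · obtain ⟨e1, he1⟩ := h1
      by_cases h3 : C3.Nonempty
      · -- case 5a : (v=1) + (v≥3)
        obtain ⟨e3, he3⟩ := h3
        have hne : e1 ≠ e3 := hne13 he1 he3
        refine ⟨{e1, e3}, by rw [Finset.card_pair hne], ?_⟩
        apply sqrt_cases; right; left
        rw [map_sum, Finset.sum_pair hne, hG2, hG2, sq1' e1 he1, sq3' e3 he3]
        decide
      · by_cases h2c : 2 ≤ C2.card
        · -- case 5b : (v=1) + two (v=2)
          obtain ⟨f1, hf1, f2, hf2, hff⟩ := Finset.one_lt_card.mp (by omega : 1 < C2.card)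
          have h1f1 : e1 ≠ f1 := hne12 he1 hf1
          have h1f2 : e1 ≠ f2 := hne12 he1 hf2
          refine ⟨{e1, f1, f2}, ?_, ?_⟩
          · rw [Finset.card_insert_of_notMem (by simp [h1f1, h1f2]), Finset.card_pair hff]; omega
          · apply sqrt_cases; right; left
            rw [map_sum, Finset.sum_insert (by simp [h1f1, h1f2]), Finset.sum_pair hff,
              hG2, hG2, hG2, sq1' e1 he1, sq2' f1 hf1, sq2' f2 hf2]
            decide
        · -- C3 = ∅, C2.card ≤ 1
          have hC3e : C3 = ∅ := Finset.not_nonempty_iff_eq_empty.mp h3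
          have hmemC1 : ∀ i, i ∈ C1 ↔ i ∉ C2 := by
            intro i
            constructor
            · intro hi hj
              rw [hC1def, Finset.mem_filter] at hi; rw [hC2def, Finset.mem_filter] at hj
              exact hval12 _ hi.2 hj.2
            · intro hj
              rw [hC2def, Finset.mem_filter] at hj
              rw [hC1def, Finset.mem_filter]
              refine ⟨Finset.mem_univ i, ?_⟩
              by_contra hcon
              have hi4 : g i ≠ 4 := fun h => hj ⟨Finset.mem_univ i, h⟩
              have hi0 : g i ≠ 0 := by
                intro h
                have : i ∈ C3 := by rw [hC3def, Finset.mem_filter]; exact ⟨Finset.mem_univ i, h⟩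
                rw [hC3e] at this; exact absurd this (Finset.notMem_empty i)
              have : i ∈ C0 := by
                rw [hC0def, Finset.mem_filter]; exact ⟨Finset.mem_univ i, hcon, hi4, hi0⟩
              rw [hC0e] at this; exact absurd this (Finset.notMem_empty i)
          have hC1compl : C1 = C2ᶜ := Finset.ext fun i => by
            rw [Finset.mem_compl]; exact hmemC1 i
          have hcard1 : C1.card = 7 - C2.card := by
            rw [hC1compl, Finset.card_compl]; rfl
          by_cases hc2 : C2.card = 1
          · -- case 5c : five (v=1) + one (v=2)
            obtain ⟨e2, he2⟩ := Finset.card_eq_one.mp hc2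
            have he2C2 : e2 ∈ C2 := by rw [he2]; exact Finset.mem_singleton_self e2
            set s : Finset (Fin 7) := C1.erase e1 with hsdef
            have hscard : s.card = 5 := by
              rw [hsdef, Finset.card_erase_of_mem he1, hcard1, hc2]
            have hsub : s ⊆ C1 := Finset.erase_subset _ _
            have hes : e2 ∉ s := fun h => (hne12 (hsub h) he2C2) rfl
            refine ⟨insert e2 s, ?_, ?_⟩
            · rw [Finset.card_insert_of_notMem hes, hscard]; omega
            · apply sqrt_cases; right; left
              rw [map_sum, Finset.sum_insert hes, hG2, sq2' e2 he2C2]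
              have : ∑ i ∈ s, PadicInt.toZModPow 5 ((b i)^2) = ∑ i ∈ s, 4 := by
                refine Finset.sum_congr rfl fun i hi => ?_
                rw [hG2, sq1' i (hsub hi)]
              rw [this, Finset.sum_const, hscard]
              decide
          · -- C2 = ∅, C1 = univ : EGZ case with v=1 elements
            have hc2' : C2.card = 0 := by omega
            have hC1univ : C1 = Finset.univ := by
              rw [hC1compl, Finset.card_eq_zero.mp hc2']; simp
            have hu : ∀ i, (G i)^2 = 4 := fun i =>
              sq1' i (by rw [hC1univ]; exact Finset.mem_univ i)
            have hker : ∀ i, ∃ c, (b i)^2 = 4 + 2^5 * c := by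
              intro i
              have : PadicInt.toZModPow 5 ((b i)^2 - 4) = 0 := by
                rw [map_sub, hG2, hu i, show (PadicInt.toZModPow 5 (4:ℤ_[2])) = 4 from map_ofNat _ 4,
                  sub_self]
              obtain ⟨c, hc⟩ := ker_pow 5 _ this
              exact ⟨c, by linear_combination hc⟩
            choose c hc using hker
            obtain ⟨T, hT4, hTsum⟩ := egz4 (fun i => PadicInt.toZModPow 2 (c i))
            have hker2 : PadicInt.toZModPow 2 (∑ i ∈ T, c i) = 0 := by
              rw [map_sum]; exact hTsum
            obtain ⟨d, hd⟩ := ker_pow 2 _ hker2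
            refine ⟨T, by omega, ?_⟩
            apply sqrt_cases; right; right
            have hsum : ∑ i ∈ T, (b i)^2 = 16 + 2^7 * d := by
              calc ∑ i ∈ T, (b i)^2 = ∑ i ∈ T, (4 + 2^5 * c i) :=
                    Finset.sum_congr rfl (fun i _ => hc i)
                _ = T.card • (4:ℤ_[2]) + 2^5 * ∑ i ∈ T, c i := by
                    rw [Finset.sum_add_distrib, Finset.sum_const, Finset.mul_sum]
                _ = 16 + 2^7 * d := by rw [hT4, hd]; push_cast; ring
            rw [hsum, map_add, map_mul, chi_two_pow 7 7 (by norm_num) le_rfl, zero_mul, add_zero,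
              map_ofNat]
    · -- C0 = C1 = ∅ : contradicts hnr
      exfalso
      obtain ⟨i, hi⟩ := hnr
      have hiC1 : i ∉ C1 := by
        rw [Finset.not_nonempty_iff_eq_empty.mp h1]; exact Finset.notMem_empty i
      rw [hC1def, Finset.mem_filter] at hiC1
      have h26 : ¬(g i = 2 ∨ g i = 6) := fun h => hiC1 ⟨Finset.mem_univ i, h⟩
      have : i ∈ C0 := by
        rw [hC0def, Finset.mem_filter]
        exact ⟨Finset.mem_univ i, h26, fun h => hi (Or.inl h), fun h => hi (Or.inr h)⟩
      rw [hC0e] at this; exact absurd this (Finset.notMem_empty i)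


end KeyStep

lemma key_aux : ∀ (k : ℕ) (b : Fin 7 → ℤ_[2]), (∀ i, b i ≠ 0) → (b 0).valuation ≤ (k:ℤ) →
    ∃ T : Finset (Fin 7), 2 ≤ T.card ∧ ∃ r : ℤ_[2], ∑ i ∈ T, (b i)^2 = r^2 := by
  intro k
  induction k with
  | zero =>
    intro b hb hval
    by_cases hnr : ∃ i, ¬(gg b i = 4 ∨ gg b i = 0)
    · exact key_step b hnr
    · exfalso
      push_neg at hnr
      have h4 : PadicInt.toZModPow 2 (b 0) = 0 := by
        have := hnr 0
        have hcast : ZMod.castHom (pow_dvd_pow 2 (show 2 ≤ 3 by norm_num)) (ZMod (2^2))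
            (gg b 0) = PadicInt.toZModPow 2 (b 0) :=
          RingHom.congr_fun (PadicInt.zmod_cast_comp_toZModPow 2 3 (by norm_num)) (b 0)
        rw [← hcast]
        have hv : ∀ u : ZMod (2^3), (u = 4 ∨ u = 0) →
            ZMod.castHom (pow_dvd_pow 2 (show 2 ≤ 3 by norm_num)) (ZMod (2^2)) u = 0 := by decide
        exact hv _ this
      obtain ⟨c, hc⟩ := ker_pow 2 _ h4
      have hcne : c ≠ 0 := by
        intro h; rw [h, mul_zero] at hc; exact hb 0 hc
      have : (b 0).valuation = 2 + c.valuation := by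
        rw [hc, show (2:ℤ_[2])^2 = ((2:ℕ):ℤ_[2])^2 by norm_num]
        exact PadicInt.valuation_p_pow_mul 2 c hcne
      have := Nat.zero_le c.valuation
      omega
  | succ k ih =>
    intro b hb hval
    by_cases hnr : ∃ i, ¬(gg b i = 4 ∨ gg b i = 0)
    · exact key_step b hnr
    · push_neg at hnr
      have h4 : ∀ i, PadicInt.toZModPow 2 (b i) = 0 := by
        intro i
        have := hnr i
        have hcast : ZMod.castHom (pow_dvd_pow 2 (show 2 ≤ 3 by norm_num)) (ZMod (2^2))
            (gg b i) = PadicInt.toZModPow 2 (b i) :=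
          RingHom.congr_fun (PadicInt.zmod_cast_comp_toZModPow 2 3 (by norm_num)) (b i)
        rw [← hcast]
        have hv : ∀ u : ZMod (2^3), (u = 4 ∨ u = 0) →
            ZMod.castHom (pow_dvd_pow 2 (show 2 ≤ 3 by norm_num)) (ZMod (2^2)) u = 0 := by decide
        exact hv _ this
      have hker : ∀ i, ∃ c, b i = 2^2 * c := fun i => ker_pow 2 _ (h4 i)
      choose c hc using hker
      have hcne : ∀ i, c i ≠ 0 := fun i h => hb i (by rw [hc i, h, mul_zero])
      have hv0 : (b 0).valuation = 2 + (c 0).valuation := by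
        rw [hc 0, show (2:ℤ_[2])^2 = ((2:ℕ):ℤ_[2])^2 by norm_num]
        exact PadicInt.valuation_p_pow_mul 2 (c 0) (hcne 0)
      have hvnn := Nat.zero_le (c 0).valuation
      obtain ⟨T, hT, r, hr⟩ := ih c hcne (by omega)
      refine ⟨T, hT, 4*r, ?_⟩
      calc ∑ i ∈ T, (b i)^2 = ∑ i ∈ T, 16 * (c i)^2 :=
            Finset.sum_congr rfl (fun i _ => by rw [hc i]; ring)
        _ = 16 * ∑ i ∈ T, (c i)^2 := by rw [Finset.mul_sum]
        _ = (4*r)^2 := by rw [hr]; ring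

lemma totallyReal_ratCast (q : ℚ) : TotallyReal ((q : ℚ_[2])) := by
  have hq : (q : ℚ_[2]) = algebraMap ℚ ℚ_[2] q := rfl
  constructor
  · rw [hq]; exact isAlgebraic_algebraMap q
  · intro z hz
    rw [hq, minpoly.eq_X_sub_C] at hz
    simp only [map_sub, aeval_X, aeval_C] at hz
    have hz' : z = ((q:ℂ)) := by
      have h := sub_eq_zero.mp hz
      rwa [eq_ratCast (algebraMap ℚ ℂ) q] at h
    rw [hz']; exact Complex.ratCast_im q

lemma mem_S_natCast (n : ℕ) :
    ((n : ℚ_[2])) ∈ {y : ℚ_[2] | TotallyReal y ∧ IsIntegral ℤ y} := by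
  constructor
  · have : ((n:ℚ_[2])) = (((n:ℚ)):ℚ_[2]) := by push_cast; rfl
    rw [this]; exact totallyReal_ratCast n
  · have : ((n:ℚ_[2])) = algebraMap ℤ ℚ_[2] (n:ℤ) := by push_cast; rfl
    rw [this]; exact isIntegral_algebraMap

section SOS
variable {R : Type*} [CommRing R] {S : Set R}

lemma sos_mono (h0 : (0:R) ∈ S) {n m : ℕ} (h : n ≤ m) {x : R} :
    IsSumOfSquaresIn S n x → IsSumOfSquaresIn S m x := by
  rintro ⟨f, hf, rfl⟩
  set F : ℕ → R := fun j => if h' : j < n then f ⟨j, h'⟩ else 0 with hF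
  refine ⟨fun j => F j, fun j => ?_, ?_⟩
  · rw [hF]; dsimp only; split
    · exact hf _
    · exact h0
  · rw [Fin.sum_univ_eq_sum_range (fun j => (F j)^2) m]
    rw [show (∑ i : Fin n, (f i)^2) = ∑ i : Fin n, (F i)^2 by
      refine Finset.sum_congr rfl fun i _ => ?_
      rw [hF]; dsimp only; rw [dif_pos i.isLt, Fin.eta]]
    rw [Fin.sum_univ_eq_sum_range (fun j => (F j)^2) n]
    refine Finset.sum_subset (Finset.range_subset_range.mpr h) fun j _ hj => ?_
    rw [Finset.mem_range, not_lt] at hj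
    rw [hF]; dsimp only; rw [dif_neg (by omega)]
    ring

lemma sos_add {n m : ℕ} {x y : R} (hx : IsSumOfSquaresIn S n x)
    (hy : IsSumOfSquaresIn S m y) : IsSumOfSquaresIn S (n + m) (x + y) := by
  obtain ⟨f, hf, rfl⟩ := hx
  obtain ⟨g, hg, rfl⟩ := hy
  refine ⟨Fin.append f g, fun j => ?_, ?_⟩
  · exact Fin.addCases (fun i => by rw [Fin.append_left]; exact hf i)
      (fun i => by rw [Fin.append_right]; exact hg i) j
  · conv_rhs => rw [Fin.sum_univ_add (fun i : Fin (n+m) => (Fin.append f g i)^2)]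
    simp [Fin.append_left, Fin.append_right]

lemma sos_single {r : R} (hr : r ∈ S) : IsSumOfSquaresIn S 1 (r^2) :=
  ⟨fun _ => r, fun _ => hr, by simp⟩

lemma sos_of_finset {ι : Type} (u : Finset ι) (f : ι → R) (hf : ∀ i ∈ u, f i ∈ S) :
    IsSumOfSquaresIn S u.card (∑ i ∈ u, (f i)^2) := by
  classical
  set e := u.equivFin with he
  refine ⟨fun j => f (e.symm j).1, fun j => hf _ (e.symm j).2, ?_⟩
  have h1 : ∑ i ∈ u, (f i)^2 = ∑ a : {x // x ∈ u}, (f a.1)^2 :=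
    (Finset.sum_coe_sort u (fun i => (f i)^2)).symm
  rw [h1]
  exact Fintype.sum_equiv e (fun a => (f a.1)^2) (fun j => (f (e.symm j).1)^2)
    (fun a => by simp)
end SOS


lemma lift_S {y : ℚ_[2]} (hy : IsIntegral ℤ y) : ∃ b : ℤ_[2], (b : ℚ_[2]) = y := by
  have h2 : IsIntegral ℤ_[2] y := hy.tower_top
  exact IsIntegrallyClosed.isIntegral_iff.mp h2

lemma coe_two : (((2:ℤ_[2]) : ℚ_[2])) = 2 := by norm_cast

lemma part1 : ∀ x : ℚ_[2],
    IsSumOfSquaresIn {y : ℚ_[2] | TotallyReal y ∧ IsIntegral ℤ y} 7 x →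
    IsSumOfSquaresIn {y : ℚ_[2] | TotallyReal y ∧ IsIntegral ℤ y} 6 x := by
  intro x hx
  obtain ⟨f, hf, rfl⟩ := hx
  by_cases hz : ∃ i, f i = 0
  · obtain ⟨i, hzi⟩ := hz
    refine ⟨fun j => f (i.succAbove j), fun j => hf _, ?_⟩
    rw [Fin.sum_univ_succAbove (fun j => (f j)^2) i, hzi]
    simp
  · push_neg at hz
    choose B hB using fun i => lift_S (hf i).2
    have hBne : ∀ i, B i ≠ 0 := by
      intro i h
      apply hz i
      rw [← hB i, h]; simp
    obtain ⟨T, hT2, r, hr⟩ := key_aux (B 0).valuation B hBne le_rfl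
    have hTcard : T.card ≤ 7 := by
      calc T.card ≤ (Finset.univ : Finset (Fin 7)).card := Finset.card_le_card (Finset.subset_univ T)
        _ = 7 := by simp
    have hrQ : ∑ i ∈ T, (f i)^2 = ((r:ℚ_[2]))^2 := by
      have h1 : ((∑ i ∈ T, (B i)^2 : ℤ_[2]) : ℚ_[2]) = (((r^2 : ℤ_[2])) : ℚ_[2]) := by
        rw [hr]
      have h2 : ((∑ i ∈ T, (B i)^2 : ℤ_[2]) : ℚ_[2]) = ∑ i ∈ T, ((B i : ℚ_[2]))^2 := by
        norm_cast
        exact map_sum (PadicInt.Coe.ringHom (p := 2)) (fun i => (B i)^2) T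
      rw [h2] at h1
      push_cast at h1
      calc ∑ i ∈ T, (f i)^2 = ∑ i ∈ T, ((B i : ℚ_[2]))^2 :=
            Finset.sum_congr rfl (fun i _ => by rw [hB i])
        _ = ((r:ℚ_[2]))^2 := h1
    have hrS : TotallyReal ((r:ℚ_[2])) ∧ IsIntegral ℤ ((r:ℚ_[2])) :=
      star T f (fun i _ => hf i) _ hrQ.symm
    have hsplit : (∑ i : Fin 7, (f i)^2) = ((r:ℚ_[2]))^2 + ∑ i ∈ Tᶜ, (f i)^2 := by
      rw [← hrQ, Finset.sum_add_sum_compl T (fun i => (f i)^2)]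
    rw [hsplit]
    have hcompl : Tᶜ.card = 7 - T.card := by
      rw [Finset.card_compl]; rfl
    have hadd := sos_add (S := {y : ℚ_[2] | TotallyReal y ∧ IsIntegral ℤ y})
      (sos_single (Set.mem_setOf.mpr hrS))
      (sos_of_finset Tᶜ f (fun i _ => hf i))
    exact sos_mono (by
        have := mem_S_natCast 0
        simpa using this) (by omega) hadd

lemma mem_S_zero : (0:ℚ_[2]) ∈ {y : ℚ_[2] | TotallyReal y ∧ IsIntegral ℤ y} := by
  have := mem_S_natCast 0; simpa using this

lemma mem_S_one : (1:ℚ_[2]) ∈ {y : ℚ_[2] | TotallyReal y ∧ IsIntegral ℤ y} := by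
  have := mem_S_natCast 1; simpa using this

lemma mem_S_two : (2:ℚ_[2]) ∈ {y : ℚ_[2] | TotallyReal y ∧ IsIntegral ℤ y} := by
  have := mem_S_natCast 2
  norm_num at this
  exact this

lemma sq_eq_in_padicInt {y : ℚ_[2]} (hy : IsIntegral ℤ y) (m : ℕ)
    (h : y^2 = (m:ℚ_[2])) : ∃ b : ℤ_[2], b^2 = (m:ℤ_[2]) := by
  obtain ⟨b, hb⟩ := lift_S hy
  refine ⟨b, Subtype.coe_injective ?_⟩
  push_cast
  rw [hb, h]

end TRQp2Aux

open TRQp2Aux in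
theorem pythagoras_bounds_for_totally_real_integers_of_Qp2 :
    (∀ x : ℚ_[2], IsSumOfSquaresIn {y : ℚ_[2] | TotallyReal y ∧ IsIntegral ℤ y} 7 x →
      IsSumOfSquaresIn {y : ℚ_[2] | TotallyReal y ∧ IsIntegral ℤ y} 6 x) ∧
    4 ≤ pythagorasNumberOf {y : ℚ_[2] | TotallyReal y ∧ IsIntegral ℤ y} ∧
    pythagorasNumberOf {y : ℚ_[2] | TotallyReal y ∧ IsIntegral ℤ y} ≤ 6 := by
  set S : Set ℚ_[2] := {y : ℚ_[2] | TotallyReal y ∧ IsIntegral ℤ y} with hSdef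
  refine ⟨part1, ?_, ?_⟩
  · -- lower bound
    apply le_sInf
    rintro e ⟨n, hn, rfl⟩
    have h4n : 4 ≤ n := by
      by_contra hcon
      push_neg at hcon
      interval_cases n
      · -- n = 0 : x = 1
        have h1 : IsSumOfSquaresIn S 1 1 := ⟨fun _ => 1, fun _ => mem_S_one, by simp⟩
        obtain ⟨f, -, hf⟩ := (hn 1).mpr h1
        simp at hf
      · -- n = 1 : x = 2
        have h2 : IsSumOfSquaresIn S 2 2 :=
          ⟨![1,1], fun i => by fin_cases i <;> exact mem_S_one, by
            rw [Fin.sum_univ_two]; norm_num⟩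
        obtain ⟨f, hfS, hf⟩ := (hn 2).mpr h2
        rw [Fin.sum_univ_one] at hf
        obtain ⟨b, hb⟩ := sq_eq_in_padicInt (hfS 0).2 2 hf.symm
        have hz : (PadicInt.toZModPow 3 b)^2 = 2 := by
          have := congrArg (PadicInt.toZModPow 3) hb
          rw [map_pow, map_natCast] at this
          simpa using this
        have : ∀ u : ZMod (2^3), u^2 ≠ 2 := by decide
        exact this _ hz
      · -- n = 2 : x = 3
        have h3 : IsSumOfSquaresIn S 3 3 :=
          ⟨![1,1,1], fun i => by fin_cases i <;> exact mem_S_one, by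
            rw [Fin.sum_univ_three]; norm_num [Matrix.cons_val_two]⟩
        obtain ⟨f, hfS, hf⟩ := (hn 3).mpr h3
        rw [Fin.sum_univ_two] at hf
        obtain ⟨b0, hb0⟩ := lift_S (hfS 0).2
        obtain ⟨b1, hb1⟩ := lift_S (hfS 1).2
        have hbb : b0^2 + b1^2 = ((3:ℕ):ℤ_[2]) := by
          apply Subtype.coe_injective
          push_cast
          rw [hb0, hb1, ← hf]
          norm_cast
        have hz : (PadicInt.toZModPow 3 b0)^2 + (PadicInt.toZModPow 3 b1)^2 = 3 := by
          have := congrArg (PadicInt.toZModPow 3) hbb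
          rw [map_add, map_pow, map_pow, map_natCast] at this
          simpa using this
        have : ∀ u v : ZMod (2^3), u^2 + v^2 ≠ 3 := by decide
        exact this _ _ hz
      · -- n = 3 : x = 7
        have h7 : IsSumOfSquaresIn S 4 7 :=
          ⟨![2,1,1,1], fun i => by
            fin_cases i <;> first | exact mem_S_one | exact mem_S_two, by
            rw [Fin.sum_univ_four]; norm_num [Matrix.cons_val_two, Matrix.cons_val_three]⟩
        obtain ⟨f, hfS, hf⟩ := (hn 7).mpr h7
        rw [Fin.sum_univ_three] at hf
        obtain ⟨b0, hb0⟩ := lift_S (hfS 0).2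
        obtain ⟨b1, hb1⟩ := lift_S (hfS 1).2
        obtain ⟨b2, hb2⟩ := lift_S (hfS 2).2
        have hbb : b0^2 + b1^2 + b2^2 = ((7:ℕ):ℤ_[2]) := by
          apply Subtype.coe_injective
          push_cast
          rw [hb0, hb1, hb2, ← hf]
          norm_cast
        have hz : (PadicInt.toZModPow 3 b0)^2 + (PadicInt.toZModPow 3 b1)^2
            + (PadicInt.toZModPow 3 b2)^2 = 7 := by
          have := congrArg (PadicInt.toZModPow 3) hbb
          rw [map_add, map_add, map_pow, map_pow, map_pow, map_natCast] at this
          simpa using this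
        have : ∀ u v w : ZMod (2^3), u^2 + v^2 + w^2 ≠ 7 := by decide
        exact this _ _ _ hz
    exact_mod_cast Nat.cast_le.mpr h4n
  · -- upper bound
    apply sInf_le
    refine ⟨6, fun x => ⟨fun h => sos_mono mem_S_zero (by norm_num) h, fun h => part1 x h⟩, rfl⟩
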